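/- Let h be a real-valued function of class C^{2+ε} (0 < ε < 1) on a neighborhood of 0 in ℂ^{k−1} × ℝ, written h(z', t), and let r(z', t) := h(z', t) − P(z') where P is a real homogeneous polynomial of degree 2, with r(z', t) = O(‖(z', t)‖^{2+ε}). Suppose there is a map Ψ : ℂ^{k−1} × ℝ → ℂ^{k−1} × ℝ with λ·r(z', t) = r(Ψ(z', t)) for λ > 1, and Ψ^{−s}(z', t) = O(λ^{−s/2}·log s) as s → ∞. Then r ≡ 0. -/

import Mathlib

open Filter Real

/-- `(log s)^p / μ^s → 0` for `μ > 1`, `p ≥ 0`. -/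
lemma aux_log_pow_div_tendsto {μ : ℝ} (hμ : 1 < μ) {p : ℝ} (hp : 0 ≤ p) :
    Tendsto (fun s : ℕ => (Real.log s) ^ p / μ ^ s) atTop (nhds 0) := by
  apply squeeze_zero' (g := fun s : ℕ => (s : ℝ) ^ (⌈p⌉₊) / μ ^ s)
  · filter_upwards [eventually_ge_atTop 1] with s hs
    have h1 : (0:ℝ) ≤ Real.log s := Real.log_nonneg (by exact_mod_cast hs)
    positivity
  · filter_upwards [eventually_ge_atTop 1] with s hs
    have hs1 : (1:ℝ) ≤ (s:ℝ) := by exact_mod_cast hs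
    have h1 : (0:ℝ) ≤ Real.log s := Real.log_nonneg hs1
    have hls : Real.log s ≤ (s:ℝ) := (Real.log_le_sub_one_of_pos (by linarith)).trans (by linarith)
    have h2 : (Real.log s) ^ p ≤ (s:ℝ) ^ p := Real.rpow_le_rpow h1 hls hp
    have h3 : (s:ℝ) ^ p ≤ (s:ℝ) ^ ((⌈p⌉₊ : ℕ) : ℝ) :=
      Real.rpow_le_rpow_of_exponent_le hs1 (by exact_mod_cast Nat.le_ceil p)
    rw [Real.rpow_natCast] at h3
    have hμs : (0:ℝ) < μ ^ s := pow_pos (by linarith) s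
    gcongr
    exact h2.trans h3
  · exact tendsto_pow_const_div_const_pow_of_one_lt _ hμ

/-- Rigidity: if `r = O(‖·‖^{2+ε})` near `0`, `λ·r = r ∘ Ψ` for some
`λ > 1`, and the backward iterates satisfy `Ψ^{−s}(x) = O(λ^{−s/2} log s)`, then
`r ≡ 0`. -/
theorem stmt_11 (n : ℕ) (ε : ℝ) (hε0 : 0 < ε) (hε1 : ε < 1)
    (r : (EuclideanSpace ℂ (Fin n) × ℝ) → ℝ)
    (hbound : ∃ δ > (0:ℝ), ∃ C > (0:ℝ), ∀ x : EuclideanSpace ℂ (Fin n) × ℝ,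
      ‖x‖ ≤ δ → |r x| ≤ C * ‖x‖ ^ (2 + ε))
    (lam : ℝ) (hlam : 1 < lam)
    (Ψ Ψinv : (EuclideanSpace ℂ (Fin n) × ℝ) → (EuclideanSpace ℂ (Fin n) × ℝ))
    (hΨ : ∀ x, Ψ (Ψinv x) = x)
    (hfunc : ∀ x, lam * r x = r (Ψ x))
    (hdecay : ∀ x, ∃ C > (0:ℝ), ∀ s : ℕ, 2 ≤ s →
      ‖Ψinv^[s] x‖ ≤ C * lam ^ (-(s : ℝ) / 2) * Real.log s) :
    ∀ x, r x = 0 := by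
  obtain ⟨δ, hδ, C, hC, hb⟩ := hbound
  have hlam0 : (0:ℝ) < lam := by linarith
  intro x
  obtain ⟨C', hC', hd⟩ := hdecay x
  -- functional iteration: r x = lam^s * r (Ψinv^[s] x)
  have hiter : ∀ s : ℕ, r x = lam ^ s * r (Ψinv^[s] x) := by
    intro s
    induction s with
    | zero => simp
    | succ s ih =>
      rw [Function.iterate_succ_apply', pow_succ]
      have := hfunc (Ψinv (Ψinv^[s] x))
      rw [hΨ] at this
      rw [mul_assoc, this, ← ih]
  set F : ℕ → ℝ := fun s => C' * lam ^ (-(s : ℝ) / 2) * Real.log s with hFdef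
  -- F → 0
  have hμ : (1:ℝ) < lam ^ ((1:ℝ)/2) := Real.one_lt_rpow_iff_of_pos hlam0 |>.2 (Or.inl ⟨hlam, by norm_num⟩)
  have hpowhalf : ∀ s : ℕ, lam ^ (-(s:ℝ)/2) = ((lam ^ ((1:ℝ)/2)) ^ s)⁻¹ := by
    intro s
    rw [← Real.rpow_natCast (lam ^ ((1:ℝ)/2)) s, ← Real.rpow_mul hlam0.le, ← Real.rpow_neg hlam0.le]
    ring_nf
  have hF0 : Tendsto F atTop (nhds 0) := by
    have : F = fun s : ℕ => C' * ((Real.log s) ^ (1:ℝ) / (lam ^ ((1:ℝ)/2)) ^ s) := by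
      funext s
      rw [hFdef]
      simp only [Real.rpow_one, hpowhalf s]
      ring
    rw [this]
    simpa using (aux_log_pow_div_tendsto hμ (zero_le_one)).const_mul C'
  -- the dominating sequence G
  set G : ℕ → ℝ := fun s => lam ^ s * C * (F s) ^ (2 + ε) with hGdef
  have hν : (1:ℝ) < lam ^ (ε/2) := Real.one_lt_rpow_iff_of_pos hlam0 |>.2 (Or.inl ⟨hlam, by linarith⟩)
  have hG0 : Tendsto G atTop (nhds 0) := by
    have hcong : G =ᶠ[atTop] fun s : ℕ =>
        (C * C' ^ (2+ε)) * ((Real.log s) ^ (2+ε) / (lam ^ (ε/2)) ^ s) := by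
      filter_upwards [eventually_ge_atTop 2] with s hs
      have hlog : (0:ℝ) ≤ Real.log s :=
        Real.log_nonneg (by exact_mod_cast hs.trans' (by norm_num))
      have hA : (0:ℝ) ≤ lam ^ (-(s:ℝ)/2) := (Real.rpow_pos_of_pos hlam0 _).le
      rw [hGdef]
      simp only [hFdef]
      rw [Real.mul_rpow (mul_nonneg hC'.le hA) hlog, Real.mul_rpow hC'.le hA]
      have e1 : (lam ^ (ε/2)) ^ s = lam ^ (ε/2 * (s:ℝ)) := by
        rw [← Real.rpow_natCast (lam ^ (ε/2)) s, ← Real.rpow_mul hlam0.le]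
      have e2 : lam ^ s = lam ^ ((s:ℝ)) := (Real.rpow_natCast lam s).symm
      have e3 : (lam ^ (-(s:ℝ)/2)) ^ (2+ε) = lam ^ (-(s:ℝ)/2 * (2+ε)) :=
        (Real.rpow_mul hlam0.le _ _).symm
      have hkey : lam ^ s * (lam ^ (-(s:ℝ)/2)) ^ (2+ε) * (lam ^ (ε/2)) ^ s = 1 := by
        rw [e1, e2, e3, ← Real.rpow_add hlam0, ← Real.rpow_add hlam0,
          show (s:ℝ) + (-(s:ℝ)/2*(2+ε)) + (ε/2*(s:ℝ)) = 0 by ring, Real.rpow_zero]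
      have hν0 : ((lam ^ (ε/2)) ^ s : ℝ) ≠ 0 := (pow_pos (lt_trans one_pos hν) s).ne'
      field_simp
      rw [neg_div] at hkey
      linear_combination (Real.log (s:ℝ) ^ (2+ε)) * hkey
    refine Tendsto.congr' hcong.symm ?_
    simpa using (aux_log_pow_div_tendsto hν (by linarith : (0:ℝ) ≤ 2 + ε)).const_mul (C * C' ^ (2+ε))
  -- eventually |r x| ≤ G s
  have hev : ∀ᶠ s : ℕ in atTop, |r x| ≤ G s := by
    have hFδ : ∀ᶠ s : ℕ in atTop, F s < δ := hF0.eventually (gt_mem_nhds hδ)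
    filter_upwards [eventually_ge_atTop 2, hFδ] with s hs hFs
    have hnorm : ‖Ψinv^[s] x‖ ≤ F s := hd s hs
    have hδ' : ‖Ψinv^[s] x‖ ≤ δ := hnorm.trans hFs.le
    have h1 : |r (Ψinv^[s] x)| ≤ C * ‖Ψinv^[s] x‖ ^ (2+ε) := hb _ hδ'
    have h2 : ‖Ψinv^[s] x‖ ^ (2+ε) ≤ (F s) ^ (2+ε) :=
      Real.rpow_le_rpow (norm_nonneg _) hnorm (by linarith)
    have hls : (0:ℝ) < lam ^ s := pow_pos hlam0 s
    calc |r x| = lam ^ s * |r (Ψinv^[s] x)| := by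
          rw [hiter s, abs_mul, abs_of_pos hls]
      _ ≤ lam ^ s * (C * (F s) ^ (2+ε)) := by
          apply mul_le_mul_of_nonneg_left _ hls.le
          exact h1.trans (mul_le_mul_of_nonneg_left h2 hC.le)
      _ = G s := by rw [hGdef]; ring
  have : |r x| ≤ 0 := ge_of_tendsto hG0 hev
  exact abs_nonpos_iff.mp this
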